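/- Let e ≥ 3 be an integer. Then D_{3·2^{e−2}+1}(u, 1) = u in ℤ/2^eℤ for every u ∈ ℤ/2^eℤ, where D_k denotes the Dickson polynomial of the first kind evaluated over ℤ/2^eℤ. -/

import Mathlib

open Polynomial

section Aux

variable {S : Type*} [CommRing S]

/-- Lifting-the-exponent style lemma: if `x = 1 + 4*w` then
`x ^ 2^j = 1 + 2^(j+2) * (w + 2*s)` for some `s`. -/
private lemma aux_two_pow_lift (w : S) : ∀ j : ℕ, ∀ x : S, x = 1 + 4 * w →
    ∃ s : S, x ^ 2 ^ j = 1 + (2 : S) ^ (j + 2) * (w + 2 * s) := by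
  intro j
  induction j with
  | zero =>
    intro x hx
    refine ⟨0, by rw [hx]; norm_num⟩
  | succ n ih =>
    intro x hx
    obtain ⟨s, hs⟩ := ih x hx
    refine ⟨s + (2 : S) ^ n * (w + 2 * s) ^ 2, ?_⟩
    have h1 : x ^ 2 ^ (n + 1) = (x ^ 2 ^ n) ^ 2 := by
      rw [← pow_mul, pow_succ]
    rw [h1, hs]
    ring

/-- Odd case: if `y² = u·y - 1` with `u ≡ 3 mod 4`, then `y^(3·2^(e-2)) = 1`. -/
private lemma aux_odd (e : ℕ) (he : 3 ≤ e) (h2e : (2 : S) ^ e = 0)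
    (y u d : S) (hy2 : y * y = u * y - 1) (hu : u = 4 * d + 3) :
    y ^ (3 * 2 ^ (e - 2)) = 1 := by
  have h3 : y ^ 3 = 1 + 4 * ((d + 1) * ((u - 1) * y - 1)) := by
    linear_combination (y + u) * hy2 + ((u - 1) * y - 1) * hu
  obtain ⟨s, hs⟩ := aux_two_pow_lift ((d + 1) * ((u - 1) * y - 1)) (e - 2) (y ^ 3) h3
  have hee : e - 2 + 2 = e := by omega
  rw [hee, h2e, zero_mul, add_zero] at hs
  rw [pow_mul]
  exact hs

/-- Even case: if `y² = 2v·y - 1` and `v² + v = 2c`, then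
`(y^(3·2^(e-2)) - 1) * (y^(3·2^(e-2)+2) - 1) = 0`. -/
private lemma aux_even (e : ℕ) (he : 3 ≤ e) (h2e : (2 : S) ^ e = 0)
    (y v c : S) (hy2 : y * y = 2 * v * y - 1) (hvc : v * v + v = 2 * c) :
    (y ^ (3 * 2 ^ (e - 2)) - 1) * (y ^ (3 * 2 ^ (e - 2) + 2) - 1) = 0 := by
  rcases Nat.lt_or_ge e 4 with h4 | h4
  · -- e = 3
    have he3 : e = 3 := by omega
    subst he3
    have h8 : (8 : S) = 0 := by
      have : ((2 : S)) ^ 3 = 8 := by norm_num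
      rw [← this, h2e]
    have hy8 : y ^ 8 = 1 := by
      linear_combination (-1 + 24*v^2 - 80*v^4 + 64*v^6 + (6*v - 32*v^3 + 32*v^5)*y
          + (1 - 12*v^2 + 16*v^4)*y^2 + (-4*v + 8*v^3)*y^3 + (-1 + 4*v^2)*y^4 + 2*v*y^5
          + y^6) * hy2
        + (-3*v^2 + 10*v^4 - 8*v^6 + (-v + 10*v^3 - 24*v^5 + 16*v^7)*y) * h8
    norm_num
    rw [hy8]
    ring
  · -- e ≥ 4
    obtain ⟨j, rfl⟩ : ∃ j, e = j + 4 := ⟨e - 4, by omega⟩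
    have hw : y ^ 4 = 1 + 4 * ((2 * v ^ 3 - v) * y - v ^ 2) := by
      linear_combination (y ^ 2 + 2 * v * y + 4 * v ^ 2 - 1) * hy2
    obtain ⟨s, hs⟩ := aux_two_pow_lift ((2 * v ^ 3 - v) * y - v ^ 2) j (y ^ 4) hw
    have hee : (y ^ 4) ^ 2 ^ j = y ^ 2 ^ (j + 2) := by
      rw [← pow_mul]
      congr 1
      rw [pow_add]
      ring
    rw [hee] at hs
    set w : S := (2 * v ^ 3 - v) * y - v ^ 2 with hwdef
    set P : S := (2 : S) ^ (j + 2) with hPdef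
    set W : S := w + 2 * s with hWdef
    -- key smallness facts
    have hP2 : P * P = 0 := by
      rw [hPdef, ← pow_add]
      have : (2 : S) ^ (j + 2 + (j + 2)) = (2 : S) ^ (j + 4) * (2 : S) ^ j := by
        rw [← pow_add]; congr 1; omega
      rw [this, h2e, zero_mul]
    have h4P : 4 * P = 0 := by
      have h42 : (4 : S) = 2 ^ 2 := by norm_num
      rw [hPdef, h42, ← pow_add]
      have : (2 : S) ^ (2 + (j + 2)) = (2 : S) ^ (j + 4) := by congr 1; omega
      rw [this, h2e]
    have hW : W * (v * y - 1) = 2 * (2 * (v ^ 5 - v ^ 3) * y + v ^ 2 - v ^ 4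
        + s * (v * y - 1) - c * (v - 1) * y) := by
      rw [hWdef, hwdef]
      linear_combination (2 * v ^ 4 - v ^ 2) * hy2 + (y - v * y) * hvc
    set Z : S := 2 * (v ^ 5 - v ^ 3) * y + v ^ 2 - v ^ 4 + s * (v * y - 1) - c * (v - 1) * y
      with hZdef
    -- rewrite the goal in terms of T = y ^ 2^(j+2) = 1 + P * W
    have hj2 : j + 4 - 2 = j + 2 := by omega
    have hm1 : y ^ (3 * 2 ^ (j + 4 - 2)) = (y ^ 2 ^ (j + 2)) ^ 3 := by
      rw [hj2, ← pow_mul]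
      congr 1
      ring
    have hm2 : y ^ (3 * 2 ^ (j + 4 - 2) + 2) = (y ^ 2 ^ (j + 2)) ^ 3 * y ^ 2 := by
      rw [hj2, ← pow_mul, ← pow_add]
      congr 1
      ring
    rw [hm1, hm2, hs]
    linear_combination (-3*W^2 - P*W^3 + 12*y^2*W^2 + 19*y^2*P*W^3 + 15*y^2*P^2*W^4
        + 6*y^2*P^3*W^5 + y^2*P^4*W^6) * hP2
      + (3 * P * W) * hy2 + (6 * P) * hW + (3 * Z) * h4P

/-- From `y*z = 1` and the vanishing product, conclude the power sum identity. -/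
private lemma aux_sum (y z : S) (m : ℕ) (hyz : y * z = 1)
    (hprod : (y ^ m - 1) * (y ^ (m + 2) - 1) = 0) :
    y ^ (m + 1) + z ^ (m + 1) = y + z := by
  have hone : z * y = 1 := by rw [mul_comm]; exact hyz
  have expand : z ^ (m + 1) * ((y ^ m - 1) * (y ^ (m + 2) - 1)) =
      (z * y) ^ (m + 1) * y ^ (m + 1) - (z * y) ^ (m + 1) * y - (z * y) ^ m * z
        + z ^ (m + 1) := by ring
  rw [hprod, mul_zero, hone, one_pow, one_pow, one_mul, one_mul] at expand
  linear_combination -expand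

end Aux

theorem dickson_three_mul_two_pow_add_one_eval (e : ℕ) (he : 3 ≤ e) (u : ZMod (2 ^ e)) :
    Polynomial.eval u (Polynomial.dickson 1 1 (3 * 2 ^ (e - 2) + 1)) = u := by
  haveI : Fact (1 < 2 ^ e) := ⟨by have : 2 ^ 1 ≤ 2 ^ e := Nat.pow_le_pow_right (by norm_num) (by omega); omega⟩
  -- the quadratic x² - u x + 1 and its adjoined root
  set f : (ZMod (2 ^ e))[X] := X ^ 2 - C u * X + 1 with hf
  have hfm : f.Monic := by
    rw [hf]
    monicity!
  have hfd : f.degree = 2 := by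
    rw [hf]
    compute_degree!
  set S := AdjoinRoot f with hS
  set y : S := AdjoinRoot.root f with hy
  set φ := algebraMap (ZMod (2 ^ e)) S with hφ
  have hinj : Function.Injective φ := by
    rw [injective_iff_map_eq_zero]
    intro r hr
    by_contra hr0
    have hCr : (C r : (ZMod (2 ^ e))[X]) ≠ 0 := by simpa using hr0
    have := AdjoinRoot.mk_ne_zero_of_degree_lt hfm hCr
      (lt_of_le_of_lt degree_C_le (by rw [hfd]; norm_num))
    apply this
    rw [← hr, hφ, AdjoinRoot.algebraMap_eq]
    rfl
  -- the root relation
  have hroot : y * y - φ u * y + 1 = 0 := by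
    have h0 := AdjoinRoot.eval₂_root f
    rw [hf] at h0
    simpa [← AdjoinRoot.algebraMap_eq, ← hφ, ← hy, pow_two] using h0
  set z : S := φ u - y with hz
  have hyz : y * z = 1 := by rw [hz]; linear_combination -hroot
  have hsum : y + z = φ u := by rw [hz]; ring
  -- transfer the evaluation to S
  set k := 3 * 2 ^ (e - 2) + 1 with hk
  apply hinj
  have key : φ (Polynomial.eval u (Polynomial.dickson 1 1 k)) =
      Polynomial.eval (y + z) (Polynomial.dickson 1 (φ 1) k) := by
    rw [hsum, ← map_dickson φ, eval_map, eval₂_at_apply]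
  rw [map_one] at key
  rw [key, dickson_one_one_eval_add_inv y z hyz k, ← hsum]
  -- main algebraic identity: y^k + z^k - (y+z) = z^k * (y^(k-1)-1)(y^(k+1)-1)
  set m := 3 * 2 ^ (e - 2) with hm
  have h2e : (2 : S) ^ e = 0 := by
    have h1 : ((2 ^ e : ℕ) : ZMod (2 ^ e)) = 0 := ZMod.natCast_self (2 ^ e)
    have h2 : ((2 ^ e : ℕ) : S) = φ ((2 ^ e : ℕ) : ZMod (2 ^ e)) := by
      rw [map_natCast]
    have : ((2 ^ e : ℕ) : S) = 0 := by rw [h2, h1, map_zero]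
    simpa using this
  have hprod : (y ^ m - 1) * (y ^ (m + 2) - 1) = 0 := by
    -- case on u mod 4
    have hval : ((u.val : ℕ) : ZMod (2 ^ e)) = u := ZMod.natCast_rightInverse u
    have hφu : φ u = ((u.val : ℕ) : S) := by rw [← map_natCast φ u.val, hval]
    have hy2 : y * y = φ u * y - 1 := by linear_combination hroot
    have h4 : u.val % 4 = 0 ∨ u.val % 4 = 1 ∨ u.val % 4 = 2 ∨ u.val % 4 = 3 := by omega
    rcases h4 with h | h | h | h
    · -- u ≡ 0 mod 4 : even
      obtain ⟨q, hqe⟩ : ∃ q, u.val = 2 * (2 * q) := ⟨u.val / 4, by omega⟩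
      obtain ⟨c₀, hc₀⟩ := Nat.even_mul_succ_self (2 * q)
      have hφu2 : φ u = 2 * ((2 * q : ℕ) : S) := by
        rw [hφu, hqe]; push_cast [Nat.cast_mul (α := AdjoinRoot f)]; ring
      have hvc : ((2 * q : ℕ) : S) * ((2 * q : ℕ) : S) + ((2 * q : ℕ) : S)
          = 2 * ((c₀ : ℕ) : S) := by
        have hn : 2 * q * (2 * q) + 2 * q = 2 * c₀ := by nlinarith [hc₀]
        have h2 := congrArg (fun n : ℕ => ((n : ℕ) : S)) hn
        push_cast [Nat.cast_mul (α := AdjoinRoot f)] at h2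
        push_cast [Nat.cast_mul (α := AdjoinRoot f)]
        linear_combination h2
      exact aux_even e he h2e y _ _ (by rw [hy2, hφu2]) hvc
    · -- u ≡ 1 mod 4 : odd, use -y
      obtain ⟨q, hqe⟩ : ∃ q, u.val = 4 * q + 1 := ⟨u.val / 4, by omega⟩
      have hd : -φ u = 4 * (-((q : ℕ) : S) - 1) + 3 := by
        rw [hφu, hqe]; push_cast [Nat.cast_mul (α := AdjoinRoot f)]; ring
      have hy2' : (-y) * (-y) = (-φ u) * (-y) - 1 := by linear_combination hy2
      have h1 : (-y) ^ m = 1 := aux_odd e he h2e (-y) (-φ u) _ hy2' hd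
      have hmeven : Even m := by
        refine ⟨3 * 2 ^ (e - 3), ?_⟩
        rw [hm]
        have h3 : e - 2 = (e - 3) + 1 := by omega
        rw [h3, pow_succ]; ring
      rw [hmeven.neg_pow] at h1
      rw [h1]
      ring
    · -- u ≡ 2 mod 4 : even
      obtain ⟨q, hqe⟩ : ∃ q, u.val = 2 * (2 * q + 1) := ⟨u.val / 4, by omega⟩
      obtain ⟨c₀, hc₀⟩ := Nat.even_mul_succ_self (2 * q + 1)
      have hφu2 : φ u = 2 * ((2 * q + 1 : ℕ) : S) := by
        rw [hφu, hqe]; push_cast [Nat.cast_mul (α := AdjoinRoot f)]; ring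
      have hvc : ((2 * q + 1 : ℕ) : S) * ((2 * q + 1 : ℕ) : S) + ((2 * q + 1 : ℕ) : S)
          = 2 * ((c₀ : ℕ) : S) := by
        have hn : (2 * q + 1) * (2 * q + 1) + (2 * q + 1) = 2 * c₀ := by nlinarith [hc₀]
        have h2 := congrArg (fun n : ℕ => ((n : ℕ) : S)) hn
        push_cast [Nat.cast_mul (α := AdjoinRoot f)] at h2
        push_cast [Nat.cast_mul (α := AdjoinRoot f)]
        linear_combination h2
      exact aux_even e he h2e y _ _ (by rw [hy2, hφu2]) hvc
    · -- u ≡ 3 mod 4 : odd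
      obtain ⟨q, hqe⟩ : ∃ q, u.val = 4 * q + 3 := ⟨u.val / 4, by omega⟩
      have hd : φ u = 4 * ((q : ℕ) : S) + 3 := by
        rw [hφu, hqe]; push_cast [Nat.cast_mul (α := AdjoinRoot f)]; ring
      have h1 : y ^ m = 1 := aux_odd e he h2e y (φ u) _ hy2 hd
      rw [h1]
      ring
  have hk2 : k = m + 1 := rfl
  rw [hk2]
  exact aux_sum y z m hyz hprod
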